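/- Let μ and ν be probability distributions on a finite set with densities p and q. The function D ↦ ∑ᵢ [pᵢ log D(i) + qᵢ log(1 − D(i))] over all D : support → (0,1) is uniquely maximized by D*(i) = pᵢ/(pᵢ + qᵢ) (on points where pᵢ + qᵢ > 0), and the maximum value equals 2·JSD(p‖q) − 2 log 2. -/

import Mathlib

/-- The Kullback–Leibler divergence on a finite set. -/
noncomputable def KLdiv {α : Type*} [Fintype α] (p q : α → ℝ) : ℝ :=
  ∑ i, p i * Real.log (p i / q i)

/-- The Jensen–Shannon divergence: `JSD(p‖q) = ½ KL(p‖m) + ½ KL(q‖m)`, `m = (p+q)/2`. -/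
noncomputable def JSD {α : Type*} [Fintype α] (p q : α → ℝ) : ℝ :=
  (1 / 2) * KLdiv p (fun i => (p i + q i) / 2) + (1 / 2) * KLdiv q (fun i => (p i + q i) / 2)

lemma bracket_ineq {a D s : ℝ} (ha : 0 ≤ a) (hD : 0 < D) (hs : 0 < s) :
    a - D * s ≤ a * Real.log (a / s) - a * Real.log D := by
  rcases eq_or_lt_of_le ha with h | h
  · simp only [← h, zero_mul, sub_zero, zero_sub, neg_nonpos]
    positivity
  · have h1 : Real.log (D * s / a) ≤ D * s / a - 1 :=
      Real.log_le_sub_one_of_pos (by positivity)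
    have h2 : Real.log (D * s / a) = Real.log D + Real.log s - Real.log a := by
      rw [Real.log_div (by positivity) h.ne', Real.log_mul hD.ne' hs.ne']
    have h3 : Real.log (a / s) = Real.log a - Real.log s :=
      Real.log_div h.ne' hs.ne'
    have h4 := mul_le_mul_of_nonneg_left h1 ha
    rw [h2] at h4
    have h5 : a * (D * s / a - 1) = D * s - a := by
      field_simp
    rw [h5] at h4
    rw [h3]
    nlinarith

lemma bracket_strict {a D s : ℝ} (ha : 0 ≤ a) (hD : 0 < D) (hs : 0 < s)
    (hne : D * s ≠ a) :
    a - D * s < a * Real.log (a / s) - a * Real.log D := by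
  rcases eq_or_lt_of_le ha with h | h
  · have hds : 0 < D * s := mul_pos hD hs
    simp only [← h, zero_mul, sub_zero, zero_sub]
    linarith
  · have h1 : Real.log (D * s / a) < D * s / a - 1 :=
      Real.log_lt_sub_one_of_pos (by positivity) (by
        intro hcon
        apply hne
        field_simp at hcon
        linarith)
    have h2 : Real.log (D * s / a) = Real.log D + Real.log s - Real.log a := by
      rw [Real.log_div (by positivity) h.ne', Real.log_mul hD.ne' hs.ne']
    have h3 : Real.log (a / s) = Real.log a - Real.log s :=
      Real.log_div h.ne' hs.ne'
    have h4 := (mul_lt_mul_iff_right₀ h).mpr h1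
    rw [h2] at h4
    have h5 : a * (D * s / a - 1) = D * s - a := by
      field_simp
    rw [h5] at h4
    rw [h3]
    nlinarith

lemma point_key {p q D : ℝ} (hp : 0 ≤ p) (hq : 0 ≤ q) (hD : D ∈ Set.Ioo (0:ℝ) 1) :
    p * Real.log D + q * Real.log (1 - D) ≤
      p * Real.log (p/(p+q)) + q * Real.log (q/(p+q)) ∧
    (p * Real.log D + q * Real.log (1 - D) =
        p * Real.log (p/(p+q)) + q * Real.log (q/(p+q)) ↔
      (0 < p + q → D = p/(p+q))) := by
  obtain ⟨hD0, hD1⟩ := hD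
  have hD1' : 0 < 1 - D := by linarith
  rcases eq_or_lt_of_le (by positivity : (0:ℝ) ≤ p + q) with hs | hs
  · have hp0 : p = 0 := by linarith
    have hq0 : q = 0 := by linarith
    simp [hp0, hq0, ← hs]
  · have h1 := bracket_ineq hp hD0 hs
    have h2 := bracket_ineq hq hD1' hs
    refine ⟨by nlinarith, ?_, ?_⟩
    · intro heq hs'
      by_contra hne
      have hDsp : D * (p+q) ≠ p := by
        intro h
        rcases eq_or_lt_of_le hp with h0 | h0
        · rw [← h0] at h; nlinarith
        · apply hne; field_simp; linarith
      have h1' := bracket_strict hp hD0 hs hDsp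
      nlinarith
    · intro hcond
      have hDeq := hcond hs
      have hps : p / (p + q) = D := hDeq.symm
      have hqs : q / (p + q) = 1 - D := by
        field_simp at hps ⊢
        linarith
      rw [hps, hqs]


lemma half_log {a b : ℝ} (ha : 0 ≤ a) (hb : 0 ≤ b) :
    a * Real.log (a / ((a + b) / 2)) = a * Real.log (a / (a + b)) + a * Real.log 2 := by
  rcases eq_or_lt_of_le ha with h | h
  · simp [← h]
  · have hs : 0 < a + b := by linarith
    have h1 : a / ((a + b) / 2) = 2 * (a / (a + b)) := by
      field_simp
    rw [h1, Real.log_mul two_ne_zero (by positivity), mul_add]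
    ring

lemma jsd_eq {α : Type*} [Fintype α] (p q : α → ℝ)
    (hp0 : ∀ i, 0 ≤ p i) (hq0 : ∀ i, 0 ≤ q i)
    (hp1 : ∑ i, p i = 1) (hq1 : ∑ i, q i = 1) :
    2 * JSD p q - 2 * Real.log 2 =
      ∑ i, (p i * Real.log (p i / (p i + q i)) + q i * Real.log (q i / (p i + q i))) := by
  unfold JSD KLdiv
  have hA : ∑ i, p i * Real.log (p i / ((p i + q i) / 2)) =
      (∑ i, p i * Real.log (p i / (p i + q i))) + Real.log 2 := by
    rw [show Real.log 2 = ∑ i, p i * Real.log 2 by rw [← Finset.sum_mul, hp1, one_mul],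
      ← Finset.sum_add_distrib]
    exact Finset.sum_congr rfl fun i _ => half_log (hp0 i) (hq0 i)
  have hB : ∑ i, q i * Real.log (q i / ((p i + q i) / 2)) =
      (∑ i, q i * Real.log (q i / (p i + q i))) + Real.log 2 := by
    rw [show Real.log 2 = ∑ i, q i * Real.log 2 by rw [← Finset.sum_mul, hq1, one_mul],
      ← Finset.sum_add_distrib]
    refine Finset.sum_congr rfl fun i _ => ?_
    have := half_log (hq0 i) (hp0 i)
    rwa [add_comm (q i) (p i)] at this
  rw [hA, hB, Finset.sum_add_distrib]
  ring

/-- GAN optimal-discriminator identity: the objective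
`D ↦ ∑ᵢ [pᵢ log D(i) + qᵢ log (1 − D(i))]` over `D : α → (0,1)` is uniquely maximized by
`D*(i) = pᵢ / (pᵢ + qᵢ)` (on points where `pᵢ + qᵢ > 0`), and the maximum value equals
`2 JSD(p‖q) − 2 log 2`. -/
theorem stmt14 {α : Type*} [Fintype α] (p q : α → ℝ)
    (hp0 : ∀ i, 0 ≤ p i) (hq0 : ∀ i, 0 ≤ q i)
    (hp1 : ∑ i, p i = 1) (hq1 : ∑ i, q i = 1) :
    (∀ D : α → ℝ, (∀ i, D i ∈ Set.Ioo (0 : ℝ) 1) →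
      (∑ i, (p i * Real.log (D i) + q i * Real.log (1 - D i)) ≤
          2 * JSD p q - 2 * Real.log 2 ∧
        (∑ i, (p i * Real.log (D i) + q i * Real.log (1 - D i)) =
            2 * JSD p q - 2 * Real.log 2 ↔
          ∀ i, 0 < p i + q i → D i = p i / (p i + q i)))) ∧
      ∑ i, (p i * Real.log (p i / (p i + q i)) +
          q i * Real.log (1 - p i / (p i + q i))) =
        2 * JSD p q - 2 * Real.log 2 := by
  have hjsd := jsd_eq p q hp0 hq0 hp1 hq1
  constructor
  · intro D hD
    have key := fun i => point_key (hp0 i) (hq0 i) (hD i)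
    have hle : ∀ i ∈ Finset.univ, p i * Real.log (D i) + q i * Real.log (1 - D i) ≤
        p i * Real.log (p i / (p i + q i)) + q i * Real.log (q i / (p i + q i)) :=
      fun i _ => (key i).1
    constructor
    · rw [hjsd]; exact Finset.sum_le_sum hle
    · rw [hjsd, Finset.sum_eq_sum_iff_of_le hle]
      constructor
      · exact fun h i hi => ((key i).2).mp (h i (Finset.mem_univ i)) hi
      · exact fun h i _ => ((key i).2).mpr (h i)
  · rw [hjsd]
    refine Finset.sum_congr rfl fun i _ => ?_
    rcases eq_or_lt_of_le (add_nonneg (hp0 i) (hq0 i)) with hs | hs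
    · have hp' : p i = 0 := by have := hp0 i; have := hq0 i; linarith
      have hq' : q i = 0 := by have := hp0 i; have := hq0 i; linarith
      simp [hp', hq']
    · have : 1 - p i / (p i + q i) = q i / (p i + q i) := by
        field_simp
        ring
      rw [this]
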